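/- For ξ > 0 and an arbitrary norm ‖·‖ on ℝ^d satisfying ℓ‖x‖₂ ≤ ‖x‖ ≤ u‖x‖₂, there exists a norm ‖·‖_{m,ξ} on ℝ^d such that M_ξ(x) = ½‖x‖_{m,ξ}² for all x, and with ℓ_ξ = √(1+ξℓ²), u_ξ = √(1+ξu²), one has ℓ_ξ‖x‖_{m,ξ} ≤ ‖x‖ ≤ u_ξ‖x‖_{m,ξ} for all x ∈ ℝ^d. -/

import Mathlib

set_option maxHeartbeats 1000000


/-- The Moreau envelope `M_ξ` of `½N(·)²` (Euclidean proximal term) is itself half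
the square of a norm `‖·‖_{m,ξ}` satisfying
`ℓ_ξ ‖x‖_{m,ξ} ≤ N x ≤ u_ξ ‖x‖_{m,ξ}` with `ℓ_ξ = √(1+ξℓ²)`, `u_ξ = √(1+ξu²)`. -/
theorem moreau_envelope_is_half_norm_squared (d : ℕ)
    (N : EuclideanSpace ℝ (Fin d) → ℝ)
    (ℓ u ξ : ℝ) (hℓ : 0 < ℓ) (hu : 0 < u) (hξ : 0 < ξ)
    (hN_add : ∀ x y, N (x + y) ≤ N x + N y)
    (hN_smul : ∀ (c : ℝ) x, N (c • x) = |c| * N x)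
    (hN_def : ∀ x, N x = 0 → x = 0)
    (hequiv : ∀ x, ℓ * ‖x‖ ≤ N x ∧ N x ≤ u * ‖x‖)
    (M : EuclideanSpace ℝ (Fin d) → ℝ)
    (hM : ∀ x, M x = ⨅ v : EuclideanSpace ℝ (Fin d),
      (N v ^ 2 / 2 + ‖x - v‖ ^ 2 / (2 * ξ))) :
    ∃ Nm : EuclideanSpace ℝ (Fin d) → ℝ,
      (∀ x y, Nm (x + y) ≤ Nm x + Nm y) ∧
      (∀ (c : ℝ) x, Nm (c • x) = |c| * Nm x) ∧
      (∀ x, Nm x = 0 → x = 0) ∧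
      (∀ x, M x = Nm x ^ 2 / 2) ∧
      (∀ x, Real.sqrt (1 + ξ * ℓ ^ 2) * Nm x ≤ N x ∧
        N x ≤ Real.sqrt (1 + ξ * u ^ 2) * Nm x) := by
  have hN0 : ∀ x, 0 ≤ N x := fun x =>
    le_trans (mul_nonneg hℓ.le (norm_nonneg x)) (hequiv x).1
  have hbdd : ∀ x : EuclideanSpace ℝ (Fin d),
      BddBelow (Set.range fun v : EuclideanSpace ℝ (Fin d) =>
        N v ^ 2 / 2 + ‖x - v‖ ^ 2 / (2 * ξ)) := by
    intro x
    refine ⟨0, ?_⟩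
    rintro r ⟨v, rfl⟩
    have := hN0 v
    positivity
  have hu2 : (0:ℝ) < 1 + ξ * u ^ 2 := by positivity
  have hl2 : (0:ℝ) < 1 + ξ * ℓ ^ 2 := by positivity
  -- lower bound on M
  have hMlow : ∀ x, N x ^ 2 / (2 * (1 + ξ * u ^ 2)) ≤ M x := by
    intro x
    rw [hM]
    refine le_ciInf fun v => ?_
    have h1 : N x ≤ N v + u * ‖x - v‖ := by
      have h2 := (hequiv (x - v)).2
      have h3 : N (v + (x - v)) ≤ N v + u * ‖x - v‖ :=
        le_trans (hN_add v (x - v)) (by linarith)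
      simpa using h3
    have hv0 := hN0 v
    have hs0 : (0:ℝ) ≤ ‖x - v‖ := norm_nonneg _
    rw [div_add_div _ _ (two_ne_zero) (by positivity : (2*ξ:ℝ) ≠ 0),
        div_le_div_iff₀ (by positivity) (by positivity)]
    rcases le_or_gt (N x) (u * ‖x - v‖) with h | h
    · have h' : N x ^ 2 ≤ u ^ 2 * ‖x - v‖ ^ 2 := by
        nlinarith [mul_self_le_mul_self (hN0 x) h]
      nlinarith [mul_le_mul_of_nonneg_left h' hξ.le,
        mul_nonneg hξ.le (sq_nonneg (N v)), sq_nonneg (ξ * u * N v),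
        sq_nonneg ‖x - v‖]
    · have hsq : (N x - u * ‖x - v‖) ^ 2 ≤ N v ^ 2 := by
        nlinarith [mul_self_le_mul_self (by linarith : (0:ℝ) ≤ N x - u * ‖x - v‖)
          (by linarith : N x - u * ‖x - v‖ ≤ N v)]
      nlinarith [mul_le_mul_of_nonneg_left hsq
          (by positivity : (0:ℝ) ≤ ξ * (1 + ξ * u ^ 2)),
        sq_nonneg (ξ * u * N x - (1 + ξ * u ^ 2) * ‖x - v‖)]
  have hM0 : ∀ x, 0 ≤ M x := fun x =>
    le_trans (by positivity) (hMlow x)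
  -- upper bound on M
  have hMupp : ∀ x, M x ≤ N x ^ 2 / (2 * (1 + ξ * ℓ ^ 2)) := by
    intro x
    rw [hM]
    set t : ℝ := 1 / (1 + ξ * ℓ ^ 2) with ht
    have ht0 : 0 < t := by positivity
    have ht1 : t ≤ 1 := by rw [ht, div_le_one hl2]; nlinarith
    refine le_trans (ciInf_le (hbdd x) (t • x)) ?_
    have h1 : N (t • x) = t * N x := by rw [hN_smul, abs_of_pos ht0]
    have h3 : ‖x - t • x‖ = (1 - t) * ‖x‖ := by
      rw [show x - t • x = (1 - t) • x by rw [sub_smul, one_smul],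
        norm_smul, Real.norm_eq_abs, abs_of_nonneg (by linarith)]
    have h4 : ℓ * ‖x‖ ≤ N x := (hequiv x).1
    have h5 : ‖x‖ ≤ N x / ℓ := by rw [le_div_iff₀ hℓ]; linarith
    rw [h1, h3]
    have h6 : ((1 - t) * ‖x‖) ^ 2 ≤ ((1 - t) * (N x / ℓ)) ^ 2 := by
      apply sq_le_sq'
      · nlinarith [norm_nonneg x, hN0 x]
      · nlinarith [norm_nonneg x]
    have h7 : (t * N x) ^ 2 / 2 + ((1 - t) * (N x / ℓ)) ^ 2 / (2 * ξ)
        = N x ^ 2 / (2 * (1 + ξ * ℓ ^ 2)) := by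
      rw [ht]
      field_simp
      ring
    calc (t * N x) ^ 2 / 2 + ((1 - t) * ‖x‖) ^ 2 / (2 * ξ)
        ≤ (t * N x) ^ 2 / 2 + ((1 - t) * (N x / ℓ)) ^ 2 / (2 * ξ) :=
          add_le_add le_rfl ((div_le_div_iff_of_pos_right (by positivity : (0:ℝ) < 2 * ξ)).2 h6)
      _ = N x ^ 2 / (2 * (1 + ξ * ℓ ^ 2)) := h7
  -- M 0 = 0
  have hNzero : N 0 = 0 := by
    have := hN_smul 0 0
    simpa using this
  have hMz : M 0 = 0 := by
    have h1 := hMupp 0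
    have h2 := hM0 0
    rw [hNzero] at h1
    simp at h1
    linarith
  -- homogeneity of M
  have hMsmul_le : ∀ (c : ℝ) (x : EuclideanSpace ℝ (Fin d)), c ≠ 0 →
      M (c • x) ≤ c ^ 2 * M x := by
    intro c x hc
    have key : ∀ v, M (c • x) ≤ c ^ 2 * (N v ^ 2 / 2 + ‖x - v‖ ^ 2 / (2 * ξ)) := by
      intro v
      rw [hM]
      refine le_trans (ciInf_le (hbdd _) (c • v)) (le_of_eq ?_)
      rw [hN_smul, ← smul_sub, norm_smul, Real.norm_eq_abs, mul_pow, mul_pow, sq_abs]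
      ring
    have hc2 : (0:ℝ) < c ^ 2 := by positivity
    have h1 : M (c • x) / c ^ 2 ≤ M x := by
      rw [hM x]
      refine le_ciInf fun v => ?_
      rw [div_le_iff₀ hc2]
      linarith [key v]
    rw [div_le_iff₀ hc2] at h1
    linarith
  have hMsmul : ∀ (c : ℝ) (x : EuclideanSpace ℝ (Fin d)), M (c • x) = c ^ 2 * M x := by
    intro c x
    rcases eq_or_ne c 0 with rfl | hc
    · simpa using hMz
    · refine le_antisymm (hMsmul_le c x hc) ?_
      have h1 := hMsmul_le c⁻¹ (c • x) (inv_ne_zero hc)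
      rw [smul_smul, inv_mul_cancel₀ hc, one_smul] at h1
      have hc2 : (0:ℝ) < c ^ 2 := by positivity
      have : (c⁻¹) ^ 2 = (c ^ 2)⁻¹ := by rw [inv_pow]
      rw [this] at h1
      calc c ^ 2 * M x ≤ c ^ 2 * ((c ^ 2)⁻¹ * M (c • x)) := by
            apply mul_le_mul_of_nonneg_left h1 hc2.le
        _ = M (c • x) := by field_simp
  -- convexity of M
  have hconv : ∀ (a b : ℝ) (x y : EuclideanSpace ℝ (Fin d)), 0 ≤ a → 0 ≤ b → a + b = 1 →
      M (a • x + b • y) ≤ a * M x + b * M y := by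
    intro a b x y ha hb hab
    refine le_of_forall_pos_le_add fun ε hε => ?_
    obtain ⟨v, hv⟩ := exists_lt_of_ciInf_lt
      (show (⨅ v : EuclideanSpace ℝ (Fin d), N v ^ 2 / 2 + ‖x - v‖ ^ 2 / (2 * ξ))
          < M x + ε / 2 by rw [← hM]; linarith)
    obtain ⟨w, hw⟩ := exists_lt_of_ciInf_lt
      (show (⨅ v : EuclideanSpace ℝ (Fin d), N v ^ 2 / 2 + ‖y - v‖ ^ 2 / (2 * ξ))
          < M y + ε / 2 by rw [← hM]; linarith)
    have t1 : N (a • v + b • w) ≤ a * N v + b * N w := by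
      refine le_trans (hN_add _ _) ?_
      rw [hN_smul, hN_smul, abs_of_nonneg ha, abs_of_nonneg hb]
    have t2 : N (a • v + b • w) ^ 2 ≤ a * N v ^ 2 + b * N w ^ 2 := by
      nlinarith [mul_self_le_mul_self (hN0 (a • v + b • w)) t1,
        mul_nonneg (mul_nonneg ha hb) (sq_nonneg (N v - N w))]
    have e1 : a • x + b • y - (a • v + b • w) = a • (x - v) + b • (y - w) := by
      rw [smul_sub, smul_sub]; abel
    have t3 : ‖a • x + b • y - (a • v + b • w)‖ ≤ a * ‖x - v‖ + b * ‖y - w‖ := by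
      rw [e1]
      refine le_trans (norm_add_le _ _) ?_
      rw [norm_smul, norm_smul, Real.norm_eq_abs, Real.norm_eq_abs,
        abs_of_nonneg ha, abs_of_nonneg hb]
    have t4 : ‖a • x + b • y - (a • v + b • w)‖ ^ 2
        ≤ a * ‖x - v‖ ^ 2 + b * ‖y - w‖ ^ 2 := by
      nlinarith [mul_self_le_mul_self (norm_nonneg (a • x + b • y - (a • v + b • w))) t3,
        mul_nonneg (mul_nonneg ha hb) (sq_nonneg (‖x - v‖ - ‖y - w‖))]
    have step : M (a • x + b • y)
        ≤ a * (N v ^ 2 / 2 + ‖x - v‖ ^ 2 / (2 * ξ))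
          + b * (N w ^ 2 / 2 + ‖y - w‖ ^ 2 / (2 * ξ)) := by
      rw [hM]
      refine le_trans (ciInf_le (hbdd _) (a • v + b • w)) ?_
      have h2ξ : (0:ℝ) < 2 * ξ := by linarith
      rw [div_add_div _ _ (two_ne_zero) (ne_of_gt h2ξ)]
      rw [div_add_div _ _ (two_ne_zero) (ne_of_gt h2ξ)] 
      rw [div_add_div _ _ (two_ne_zero) (ne_of_gt h2ξ)]
      rw [← mul_div_assoc, ← mul_div_assoc, ← add_div,
        div_le_div_iff₀ (by positivity) (by positivity)]
      nlinarith [mul_le_mul_of_nonneg_left t2 (le_of_lt h2ξ),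
        mul_le_mul_of_nonneg_left t4 (by norm_num : (0:ℝ) ≤ 2)]
    have hva : a * (N v ^ 2 / 2 + ‖x - v‖ ^ 2 / (2 * ξ)) ≤ a * (M x + ε / 2) :=
      mul_le_mul_of_nonneg_left hv.le ha
    have hwb : b * (N w ^ 2 / 2 + ‖y - w‖ ^ 2 / (2 * ξ)) ≤ b * (M y + ε / 2) :=
      mul_le_mul_of_nonneg_left hw.le hb
    nlinarith [step]
  -- the norm
  set Nm : EuclideanSpace ℝ (Fin d) → ℝ := fun x => Real.sqrt (2 * M x) with hNmdefn
  have hNmsq : ∀ x, Nm x ^ 2 = 2 * M x := fun x => Real.sq_sqrt (by linarith [hM0 x])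
  have hNm0 : ∀ x, 0 ≤ Nm x := fun x => Real.sqrt_nonneg _
  have hNmdef : ∀ x, Nm x = 0 → x = 0 := by
    intro x hx
    have h1 : 2 * M x ≤ 0 := Real.sqrt_eq_zero'.1 hx
    have h2 := hMlow x
    rw [div_le_iff₀ (by positivity)] at h2
    have h3 : N x ^ 2 ≤ 0 := by nlinarith
    have h4 : N x = 0 := by nlinarith [sq_nonneg (N x), hN0 x]
    exact hN_def x h4
  have hNmsmul : ∀ (c : ℝ) (x : EuclideanSpace ℝ (Fin d)), Nm (c • x) = |c| * Nm x := by
    intro c x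
    show Real.sqrt (2 * M (c • x)) = |c| * Real.sqrt (2 * M x)
    rw [hMsmul, show 2 * (c ^ 2 * M x) = c ^ 2 * (2 * M x) by ring,
      Real.sqrt_mul (sq_nonneg c), Real.sqrt_sq_eq_abs]
  have hNmz : Nm 0 = 0 := by
    show Real.sqrt (2 * M 0) = 0
    rw [hMz]; simp
  have hNmadd : ∀ x y, Nm (x + y) ≤ Nm x + Nm y := by
    intro x y
    by_cases hx : Nm x = 0
    · have hx0 : x = 0 := hNmdef x hx
      rw [hx0, zero_add, hNmz, zero_add]
    by_cases hy : Nm y = 0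
    · have hy0 : y = 0 := hNmdef y hy
      rw [hy0, add_zero, hNmz, add_zero]
    have hax : 0 < Nm x := lt_of_le_of_ne (hNm0 x) (Ne.symm hx)
    have hbx : 0 < Nm y := lt_of_le_of_ne (hNm0 y) (Ne.symm hy)
    set a := Nm x
    set b := Nm y
    have hab : 0 < a + b := by linarith
    have hMx : M ((1 / a) • x) = 1 / 2 := by
      rw [hMsmul, div_pow, one_pow]
      have h1 := hNmsq x
      field_simp
      nlinarith
    have hMy : M ((1 / b) • y) = 1 / 2 := by
      rw [hMsmul, div_pow, one_pow]
      have h1 := hNmsq y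
      field_simp
      nlinarith
    have c1 : (a + b) * (a / (a + b)) * (1 / a) = 1 := by field_simp
    have c2 : (a + b) * (b / (a + b)) * (1 / b) = 1 := by field_simp
    have hxy : x + y = (a + b) • ((a / (a + b)) • ((1 / a) • x)
        + (b / (a + b)) • ((1 / b) • y)) := by
      rw [smul_add, smul_smul, smul_smul, smul_smul, smul_smul, c1, c2,
        one_smul, one_smul]
    have key : M (x + y) ≤ (a + b) ^ 2 / 2 := by
      rw [hxy, hMsmul]
      have hcv := hconv (a / (a + b)) (b / (a + b)) ((1 / a) • x) ((1 / b) • y)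
        (by positivity) (by positivity) (by field_simp)
      rw [hMx, hMy] at hcv
      have h1 : a / (a + b) * (1 / 2) + b / (a + b) * (1 / 2) = 1 / 2 := by
        field_simp
      rw [h1] at hcv
      calc (a + b) ^ 2 * M ((a / (a + b)) • ((1 / a) • x) + (b / (a + b)) • ((1 / b) • y))
          ≤ (a + b) ^ 2 * (1 / 2) := mul_le_mul_of_nonneg_left hcv (by positivity)
        _ = (a + b) ^ 2 / 2 := by ring
    calc Nm (x + y) = Real.sqrt (2 * M (x + y)) := rfl
      _ ≤ Real.sqrt ((a + b) ^ 2) := Real.sqrt_le_sqrt (by linarith)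
      _ = a + b := Real.sqrt_sq hab.le
  refine ⟨Nm, hNmadd, hNmsmul, hNmdef, fun x => by rw [hNmsq]; ring, fun x => ⟨?_, ?_⟩⟩
  · rw [show Nm x = Real.sqrt (2 * M x) from rfl, ← Real.sqrt_mul hl2.le]
    have h1 := hMupp x
    rw [le_div_iff₀ (by positivity)] at h1
    calc Real.sqrt ((1 + ξ * ℓ ^ 2) * (2 * M x))
        ≤ Real.sqrt (N x ^ 2) := Real.sqrt_le_sqrt (by nlinarith)
      _ = N x := Real.sqrt_sq (hN0 x)
  · rw [show Nm x = Real.sqrt (2 * M x) from rfl, ← Real.sqrt_mul hu2.le]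
    have h1 := hMlow x
    rw [div_le_iff₀ (by positivity)] at h1
    calc N x = Real.sqrt (N x ^ 2) := (Real.sqrt_sq (hN0 x)).symm
      _ ≤ Real.sqrt ((1 + ξ * u ^ 2) * (2 * M x)) := Real.sqrt_le_sqrt (by nlinarith)
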